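/- Let (H,α) be a Hom-Hopf algebra, (B,β) a right H-Hom-comodule algebra with coaction ρ(b) = b₍₀₎⊗b₍₁₎, A = B^{coH}, and γ: H → B a convolution invertible right H-comodule map with γ(1) = 1 and convolution inverse γ⁻¹. Then ρ∘γ⁻¹ = (γ⁻¹⊗S)∘τ∘Δ, where τ is the flip; in Sweedler notation, ρ(γ⁻¹(h)) = γ⁻¹(h₂) ⊗ S(h₁). -/

import Mathlib

open scoped TensorProduct BigOperators

universe u v

/-- A Hom-Hopf algebra over a field `k`, with a chosen Sweedler-type
decomposition (`Idx`, `T`, `d1`, `d2`) of the comultiplication: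
`comul h = ∑ i ∈ T h, d1 h i ⊗ₜ d2 h i`.  The structure map `α` is assumed
bijective (a linear equivalence), as throughout the paper. -/
structure HomHopf (k : Type u) (H : Type v) [Field k] [AddCommGroup H] [Module k H] where
  mul : H →ₗ[k] H →ₗ[k] H
  one : H
  α : H ≃ₗ[k] H
  comul : H →ₗ[k] H ⊗[k] H
  counit : H →ₗ[k] k
  S : H →ₗ[k] H
  Idx : Type v
  T : H → Finset Idx
  d1 : H → Idx → H
  d2 : H → Idx → H
  repr : ∀ h, comul h = ∑ i ∈ T h, d1 h i ⊗ₜ[k] d2 h i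
  α_one : α one = one
  α_mul : ∀ x y, α (mul x y) = mul (α x) (α y)
  one_mul : ∀ x, mul one x = α x
  mul_one : ∀ x, mul x one = α x
  hom_assoc : ∀ x y z, mul (α x) (mul y z) = mul (mul x y) (α z)
  counit_α : ∀ h, counit (α h) = counit h
  comul_α : ∀ h, comul (α h) = ∑ i ∈ T h, α (d1 h i) ⊗ₜ[k] α (d2 h i)
  counit_left : ∀ h, ∑ i ∈ T h, counit (d1 h i) • d2 h i = α h
  counit_right : ∀ h, ∑ i ∈ T h, counit (d2 h i) • d1 h i = α h
  hom_coassoc : ∀ h,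
    (TensorProduct.assoc k H H H) (∑ i ∈ T h, comul (d1 h i) ⊗ₜ[k] α (d2 h i))
      = ∑ i ∈ T h, α (d1 h i) ⊗ₜ[k] comul (d2 h i)
  counit_one : counit one = 1
  counit_mul : ∀ x y, counit (mul x y) = counit x * counit y
  comul_one : comul one = one ⊗ₜ[k] one
  comul_mul : ∀ x y, comul (mul x y)
      = ∑ i ∈ T x, ∑ j ∈ T y, mul (d1 x i) (d1 y j) ⊗ₜ[k] mul (d2 x i) (d2 y j)
  S_α : ∀ h, S (α h) = α (S h)
  S_left : ∀ h, ∑ i ∈ T h, mul (S (d1 h i)) (d2 h i) = counit h • one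
  S_right : ∀ h, ∑ i ∈ T h, mul (d1 h i) (S (d2 h i)) = counit h • one

/-- A unital Hom-associative algebra with bijective structure map. -/
structure HomAlg (k : Type u) (A : Type v) [Field k] [AddCommGroup A] [Module k A] where
  mul : A →ₗ[k] A →ₗ[k] A
  one : A
  β : A ≃ₗ[k] A
  β_one : β one = one
  β_mul : ∀ x y, β (mul x y) = mul (β x) (β y)
  one_mul : ∀ x, mul one x = β x
  mul_one : ∀ x, mul x one = β x
  hom_assoc : ∀ x y z, mul (β x) (mul y z) = mul (mul x y) (β z)

section Comod

variable (k : Type u) (H B : Type v) [Field k]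
  [AddCommGroup H] [Module k H] [AddCommGroup B] [Module k B]

/-- A right Hom-`H`-comodule algebra `(B,β)` with a chosen Sweedler decomposition
`ρ b = ∑ i ∈ Tc b, r0 b i ⊗ₜ r1 b i` of the coaction. -/
structure RComodAlg (HH : HomHopf k H) where
  mul : B →ₗ[k] B →ₗ[k] B
  one : B
  β : B ≃ₗ[k] B
  β_one : β one = one
  β_mul : ∀ x y, β (mul x y) = mul (β x) (β y)
  one_mul : ∀ x, mul one x = β x
  mul_one : ∀ x, mul x one = β x
  hom_assoc : ∀ x y z, mul (β x) (mul y z) = mul (mul x y) (β z)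
  ρ : B →ₗ[k] B ⊗[k] H
  Jdx : Type v
  Tc : B → Finset Jdx
  r0 : B → Jdx → B
  r1 : B → Jdx → H
  reprρ : ∀ b, ρ b = ∑ i ∈ Tc b, r0 b i ⊗ₜ[k] r1 b i
  counit_ρ : ∀ b, ∑ i ∈ Tc b, HH.counit (r1 b i) • r0 b i = β b
  ρ_β : ∀ b, ρ (β b) = ∑ i ∈ Tc b, β (r0 b i) ⊗ₜ[k] HH.α (r1 b i)
  ρ_coassoc : ∀ b, (TensorProduct.assoc k B H H)
      (∑ i ∈ Tc b, ρ (r0 b i) ⊗ₜ[k] HH.α (r1 b i))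
    = ∑ i ∈ Tc b, β (r0 b i) ⊗ₜ[k] HH.comul (r1 b i)
  ρ_mul : ∀ b b', ρ (mul b b')
    = ∑ i ∈ Tc b, ∑ j ∈ Tc b', mul (r0 b i) (r0 b' j) ⊗ₜ[k] HH.mul (r1 b i) (r1 b' j)
  ρ_one : ρ one = one ⊗ₜ[k] HH.one

variable {k H B}

/-- `γ` is a convolution invertible (with inverse `γ'`) right `H`-comodule map
`H → B` with `γ(1) = 1`, i.e. the data of a cleft extension `B^{coH} ⊆ B`. -/
def CleftData {HH : HomHopf k H} (BB : RComodAlg k H B HH) (γ γ' : H →ₗ[k] B) : Prop :=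
  (∀ h, BB.ρ (γ h) = ∑ i ∈ HH.T h, γ (HH.d1 h i) ⊗ₜ[k] HH.d2 h i) ∧
  (∀ h, γ (HH.α h) = BB.β (γ h)) ∧
  (∀ h, ∑ i ∈ HH.T h, BB.mul (γ (HH.d1 h i)) (γ' (HH.d2 h i)) = HH.counit h • BB.one) ∧
  (∀ h, ∑ i ∈ HH.T h, BB.mul (γ' (HH.d1 h i)) (γ (HH.d2 h i)) = HH.counit h • BB.one) ∧
  (γ HH.one = BB.one)

end Comod

namespace CleftProof

open TensorProduct LinearMap

variable {k : Type u} {H B : Type v} [Field k]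
  [AddCommGroup H] [Module k H] [AddCommGroup B] [Module k B]

section HopfSide

variable (HH : HomHopf k H)

/-- The untwisted ("tilde") comultiplication `Δ̃ = Δ ∘ α⁻¹`. -/
noncomputable def Dt : H →ₗ[k] H ⊗[k] H :=
  HH.comul ∘ₗ HH.α.symm.toLinearMap

lemma Dt_apply (x : H) : Dt HH x = HH.comul (HH.α.symm x) := rfl

lemma Dt_repr (x : H) :
    Dt HH x = ∑ i ∈ HH.T (HH.α.symm x),
      HH.d1 (HH.α.symm x) i ⊗ₜ[k] HH.d2 (HH.α.symm x) i := by
  rw [Dt_apply, HH.repr]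

lemma counit_symm (x : H) : HH.counit (HH.α.symm x) = HH.counit x := by
  conv_rhs => rw [← HH.α.apply_symm_apply x, HH.counit_α]

lemma comul_alpha' (x : H) :
    HH.comul x = ∑ i ∈ HH.T (HH.α.symm x),
      HH.α (HH.d1 (HH.α.symm x) i) ⊗ₜ[k] HH.α (HH.d2 (HH.α.symm x) i) := by
  conv_lhs => rw [← HH.α.apply_symm_apply x, HH.comul_α]

lemma comul_symm (x : H) :
    TensorProduct.map HH.α.symm.toLinearMap HH.α.symm.toLinearMap (HH.comul x)
      = HH.comul (HH.α.symm x) := by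
  rw [comul_alpha' HH x, map_sum]
  simp only [TensorProduct.map_tmul, LinearEquiv.coe_coe, LinearEquiv.symm_apply_apply]
  exact (HH.repr _).symm

lemma assoc_nat (f g l : H →ₗ[k] H) :
    (TensorProduct.assoc k H H H).toLinearMap ∘ₗ
        TensorProduct.map (TensorProduct.map f g) l
      = TensorProduct.map f (TensorProduct.map g l) ∘ₗ
        (TensorProduct.assoc k H H H).toLinearMap := by
  apply TensorProduct.ext_threefold
  intro a b c
  simp

/-- Coassociativity of the untwisted comultiplication. -/
lemma coassoc_t (x : H) :
    (TensorProduct.assoc k H H H)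
        ((TensorProduct.map (Dt HH) LinearMap.id) (Dt HH x))
      = (TensorProduct.map LinearMap.id (Dt HH)) (Dt HH x) := by
  set g0 := HH.α.symm x with hg0
  have h1 : (TensorProduct.map (Dt HH) LinearMap.id) (Dt HH x)
      = (TensorProduct.map
          (TensorProduct.map HH.α.symm.toLinearMap HH.α.symm.toLinearMap)
          HH.α.symm.toLinearMap)
        (∑ i ∈ HH.T g0, HH.comul (HH.d1 g0 i) ⊗ₜ[k] HH.α (HH.d2 g0 i)) := by
    rw [Dt_repr, map_sum (TensorProduct.map (Dt HH) LinearMap.id),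
      map_sum (TensorProduct.map (TensorProduct.map HH.α.symm.toLinearMap
        HH.α.symm.toLinearMap) HH.α.symm.toLinearMap)]
    refine Finset.sum_congr rfl fun i _ => ?_
    simp only [TensorProduct.map_tmul, LinearMap.id_apply, LinearEquiv.coe_coe,
      LinearEquiv.symm_apply_apply, Dt_apply, comul_symm]
    rfl
  have h2 : (TensorProduct.map LinearMap.id (Dt HH)) (Dt HH x)
      = (TensorProduct.map HH.α.symm.toLinearMap
          (TensorProduct.map HH.α.symm.toLinearMap HH.α.symm.toLinearMap))
        (∑ i ∈ HH.T g0, HH.α (HH.d1 g0 i) ⊗ₜ[k] HH.comul (HH.d2 g0 i)) := by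
    rw [Dt_repr, map_sum (TensorProduct.map LinearMap.id (Dt HH)),
      map_sum (TensorProduct.map HH.α.symm.toLinearMap
        (TensorProduct.map HH.α.symm.toLinearMap HH.α.symm.toLinearMap))]
    refine Finset.sum_congr rfl fun i _ => ?_
    simp only [TensorProduct.map_tmul, LinearMap.id_apply, LinearEquiv.coe_coe,
      LinearEquiv.symm_apply_apply, Dt_apply, comul_symm]
    rfl
  rw [h1, h2, ← HH.hom_coassoc g0]
  have := LinearMap.congr_fun
    (assoc_nat HH.α.symm.toLinearMap HH.α.symm.toLinearMap HH.α.symm.toLinearMap)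
    (∑ i ∈ HH.T g0, HH.comul (HH.d1 g0 i) ⊗ₜ[k] HH.α (HH.d2 g0 i))
  simpa using this

lemma coassoc_t' (x : H) :
    (TensorProduct.map (Dt HH) LinearMap.id) (Dt HH x)
      = (TensorProduct.assoc k H H H).symm
          ((TensorProduct.map LinearMap.id (Dt HH)) (Dt HH x)) := by
  rw [← coassoc_t, LinearEquiv.symm_apply_apply]

end HopfSide

section Conv

variable (HH : HomHopf k H) {A : Type v} [AddCommGroup A] [Module k A]
variable (nu : A →ₗ[k] A →ₗ[k] A) (oneA : A)

/-- The (untwisted) convolution product on `Hom(H, A)`. -/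
noncomputable def cs (f g : H →ₗ[k] A) : H →ₗ[k] A :=
  TensorProduct.lift nu ∘ₗ TensorProduct.map f g ∘ₗ Dt HH

/-- The convolution unit. -/
noncomputable def ce : H →ₗ[k] A :=
  LinearMap.toSpanSingleton k A oneA ∘ₗ HH.counit

lemma ce_apply (x : H) : ce HH oneA x = HH.counit x • oneA := rfl

lemma cs_def (f g : H →ₗ[k] A) (y : H) :
    cs HH nu f g y = TensorProduct.lift nu (TensorProduct.map f g (Dt HH y)) := rfl

lemma cs_apply (f g : H →ₗ[k] A) (x : H) :
    cs HH nu f g x = ∑ i ∈ HH.T (HH.α.symm x),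
      nu (f (HH.d1 (HH.α.symm x) i)) (g (HH.d2 (HH.α.symm x) i)) := by
  rw [cs_def, Dt_repr, map_sum, map_sum]
  simp [TensorProduct.map_tmul, TensorProduct.lift.tmul]

lemma cs_e_left (honel : ∀ a, nu oneA a = a) (f : H →ₗ[k] A) :
    cs HH nu (ce HH oneA) f = f := by
  ext x
  rw [cs_apply]
  have : ∀ i ∈ HH.T (HH.α.symm x),
      nu (ce HH oneA (HH.d1 (HH.α.symm x) i)) (f (HH.d2 (HH.α.symm x) i))
        = HH.counit (HH.d1 (HH.α.symm x) i) • f (HH.d2 (HH.α.symm x) i) := by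
    intro i _
    rw [ce_apply, map_smul, LinearMap.smul_apply, honel]
  rw [Finset.sum_congr rfl this]
  have : ∑ i ∈ HH.T (HH.α.symm x),
      HH.counit (HH.d1 (HH.α.symm x) i) • f (HH.d2 (HH.α.symm x) i)
        = f (∑ i ∈ HH.T (HH.α.symm x),
            HH.counit (HH.d1 (HH.α.symm x) i) • HH.d2 (HH.α.symm x) i) := by
    rw [map_sum]; simp
  rw [this, HH.counit_left, HH.α.apply_symm_apply]

lemma cs_e_right (honer : ∀ a, nu a oneA = a) (f : H →ₗ[k] A) :
    cs HH nu f (ce HH oneA) = f := by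
  ext x
  rw [cs_apply]
  have : ∀ i ∈ HH.T (HH.α.symm x),
      nu (f (HH.d1 (HH.α.symm x) i)) (ce HH oneA (HH.d2 (HH.α.symm x) i))
        = HH.counit (HH.d2 (HH.α.symm x) i) • f (HH.d1 (HH.α.symm x) i) := by
    intro i _
    rw [ce_apply, map_smul, honer]
  rw [Finset.sum_congr rfl this]
  have : ∑ i ∈ HH.T (HH.α.symm x),
      HH.counit (HH.d2 (HH.α.symm x) i) • f (HH.d1 (HH.α.symm x) i)
        = f (∑ i ∈ HH.T (HH.α.symm x),
            HH.counit (HH.d2 (HH.α.symm x) i) • HH.d1 (HH.α.symm x) i) := by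
    rw [map_sum]; simp
  rw [this, HH.counit_right, HH.α.apply_symm_apply]

lemma cs_assoc (hassoc : ∀ x y z, nu (nu x y) z = nu x (nu y z))
    (f g l : H →ₗ[k] A) :
    cs HH nu (cs HH nu f g) l = cs HH nu f (cs HH nu g l) := by
  ext x
  set Φ : (H ⊗[k] H) ⊗[k] H →ₗ[k] A :=
    TensorProduct.lift nu ∘ₗ
      TensorProduct.map (TensorProduct.lift nu ∘ₗ TensorProduct.map f g) l with hΦ
  set Ψ : H ⊗[k] (H ⊗[k] H) →ₗ[k] A :=
    TensorProduct.lift nu ∘ₗ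
      TensorProduct.map f (TensorProduct.lift nu ∘ₗ TensorProduct.map g l) with hΨ
  have hΦΨ : Φ = Ψ ∘ₗ (TensorProduct.assoc k H H H).toLinearMap := by
    apply TensorProduct.ext_threefold
    intro a b c
    simp [hΦ, hΨ, hassoc]
  have h1 : cs HH nu (cs HH nu f g) l x
      = Φ ((TensorProduct.map (Dt HH) LinearMap.id) (Dt HH x)) := by
    rw [cs_apply, Dt_repr, map_sum, map_sum]
    refine Finset.sum_congr rfl fun i _ => ?_
    simp [hΦ, cs_def]
  have h2 : cs HH nu f (cs HH nu g l) x
      = Ψ ((TensorProduct.map LinearMap.id (Dt HH)) (Dt HH x)) := by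
    rw [cs_apply, Dt_repr, map_sum, map_sum]
    refine Finset.sum_congr rfl fun i _ => ?_
    simp [hΨ, cs_def]
  rw [h1, h2, coassoc_t', hΦΨ]
  simp

lemma cs_unique (hassoc : ∀ x y z, nu (nu x y) z = nu x (nu y z))
    (honel : ∀ a, nu oneA a = a) (honer : ∀ a, nu a oneA = a)
    {f g g' : H →ₗ[k] A}
    (h1 : cs HH nu f g = ce HH oneA) (h2 : cs HH nu g' f = ce HH oneA) :
    g' = g :=
  calc g' = cs HH nu g' (ce HH oneA) := (cs_e_right HH nu oneA honer g').symm
    _ = cs HH nu g' (cs HH nu f g) := by rw [h1]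
    _ = cs HH nu (cs HH nu g' f) g := (cs_assoc HH nu hassoc g' f g).symm
    _ = cs HH nu (ce HH oneA) g := by rw [h2]
    _ = g := cs_e_left HH nu oneA honel g

end Conv

end CleftProof

namespace CleftProof

open TensorProduct LinearMap

variable {k : Type u} {H B : Type v} [Field k]
  [AddCommGroup H] [Module k H] [AddCommGroup B] [Module k B]
  {HH : HomHopf k H}

section AlgSide

variable (BB : RComodAlg k H B HH)

lemma βs_one : BB.β.symm BB.one = BB.one := by
  conv_lhs => rw [← BB.β_one]
  exact BB.β.symm_apply_apply _

lemma βs_mul (x y : B) :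
    BB.β.symm (BB.mul x y) = BB.mul (BB.β.symm x) (BB.β.symm y) := by
  apply BB.β.injective
  rw [BB.β.apply_symm_apply, BB.β_mul, BB.β.apply_symm_apply, BB.β.apply_symm_apply]

variable (HH) in
lemma αs_one : HH.α.symm HH.one = HH.one := by
  conv_lhs => rw [← HH.α_one]
  exact HH.α.symm_apply_apply _

variable (HH) in
lemma αs_mul (x y : H) :
    HH.α.symm (HH.mul x y) = HH.mul (HH.α.symm x) (HH.α.symm y) := by
  apply HH.α.injective
  rw [HH.α.apply_symm_apply, HH.α_mul, HH.α.apply_symm_apply, HH.α.apply_symm_apply]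

/-- untwisted product on `B`. -/
noncomputable def nuB : B →ₗ[k] B →ₗ[k] B :=
  (BB.mul ∘ₗ BB.β.symm.toLinearMap).compl₂ BB.β.symm.toLinearMap

lemma nuB_apply (x y : B) : nuB BB x y = BB.mul (BB.β.symm x) (BB.β.symm y) := rfl

variable (HH) in
/-- untwisted product on `H`. -/
noncomputable def nuH : H →ₗ[k] H →ₗ[k] H :=
  (HH.mul ∘ₗ HH.α.symm.toLinearMap).compl₂ HH.α.symm.toLinearMap

variable (HH) in
lemma nuH_apply (x y : H) : nuH HH x y = HH.mul (HH.α.symm x) (HH.α.symm y) := rfl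

lemma nuB_assoc (x y z : B) : nuB BB (nuB BB x y) z = nuB BB x (nuB BB y z) := by
  simp only [nuB_apply, βs_mul]
  have h := BB.hom_assoc (BB.β.symm (BB.β.symm x)) (BB.β.symm (BB.β.symm y))
    (BB.β.symm (BB.β.symm z))
  rw [BB.β.apply_symm_apply, BB.β.apply_symm_apply] at h
  exact h.symm

lemma nuB_onel (x : B) : nuB BB BB.one x = x := by
  rw [nuB_apply, βs_one, BB.one_mul, BB.β.apply_symm_apply]

lemma nuB_oner (x : B) : nuB BB x BB.one = x := by
  rw [nuB_apply, βs_one, BB.mul_one, BB.β.apply_symm_apply]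

variable (HH) in
lemma nuH_assoc (x y z : H) : nuH HH (nuH HH x y) z = nuH HH x (nuH HH y z) := by
  simp only [nuH_apply, αs_mul]
  have h := HH.hom_assoc (HH.α.symm (HH.α.symm x)) (HH.α.symm (HH.α.symm y))
    (HH.α.symm (HH.α.symm z))
  rw [HH.α.apply_symm_apply, HH.α.apply_symm_apply] at h
  exact h.symm

variable (HH) in
lemma nuH_onel (x : H) : nuH HH HH.one x = x := by
  rw [nuH_apply, αs_one, HH.one_mul, HH.α.apply_symm_apply]

variable (HH) in
lemma nuH_oner (x : H) : nuH HH x HH.one = x := by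
  rw [nuH_apply, αs_one, HH.mul_one, HH.α.apply_symm_apply]

/-- twisted tensor-product multiplication on `B ⊗ H` (i.e. `M(ρb,ρb')` pattern). -/
noncomputable def MT : (B ⊗[k] H) →ₗ[k] (B ⊗[k] H) →ₗ[k] (B ⊗[k] H) :=
  TensorProduct.curry
    ((TensorProduct.map (TensorProduct.lift BB.mul) (TensorProduct.lift HH.mul)) ∘ₗ
      (TensorProduct.tensorTensorTensorComm k B H B H).toLinearMap)

lemma MT_tmul (b : B) (u : H) (b' : B) (v : H) :
    MT BB (b ⊗ₜ[k] u) (b' ⊗ₜ[k] v) = BB.mul b b' ⊗ₜ[k] HH.mul u v := by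
  simp [MT, TensorProduct.curry_apply, TensorProduct.tensorTensorTensorComm_tmul]

/-- untwisted multiplication on `B ⊗ H`. -/
noncomputable def nuT : (B ⊗[k] H) →ₗ[k] (B ⊗[k] H) →ₗ[k] (B ⊗[k] H) :=
  TensorProduct.curry
    ((TensorProduct.map (TensorProduct.lift (nuB BB)) (TensorProduct.lift (nuH HH))) ∘ₗ
      (TensorProduct.tensorTensorTensorComm k B H B H).toLinearMap)

lemma nuT_tmul (b : B) (u : H) (b' : B) (v : H) :
    nuT BB (b ⊗ₜ[k] u) (b' ⊗ₜ[k] v) = nuB BB b b' ⊗ₜ[k] nuH HH u v := by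
  simp [nuT, TensorProduct.curry_apply, TensorProduct.tensorTensorTensorComm_tmul]

/-- unit of `B ⊗ H`. -/
noncomputable def oneT : B ⊗[k] H := BB.one ⊗ₜ[k] HH.one

lemma nuT_assoc (x y z : B ⊗[k] H) :
    nuT BB (nuT BB x y) z = nuT BB x (nuT BB y z) := by
  induction x using TensorProduct.induction_on with
  | zero => simp
  | add x1 x2 ih1 ih2 => simp [map_add, LinearMap.add_apply, ih1, ih2]
  | tmul b u =>
    induction y using TensorProduct.induction_on with
    | zero => simp
    | add y1 y2 ih1 ih2 => simp [map_add, LinearMap.add_apply, ih1, ih2]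
    | tmul b' v =>
      induction z using TensorProduct.induction_on with
      | zero => simp
      | add z1 z2 ih1 ih2 => simp [map_add, ih1, ih2]
      | tmul b'' w =>
        simp [nuT_tmul, nuB_assoc, nuH_assoc]

lemma nuT_onel (x : B ⊗[k] H) : nuT BB (oneT BB) x = x := by
  induction x using TensorProduct.induction_on with
  | zero => simp
  | add x1 x2 ih1 ih2 => simp [map_add, ih1, ih2]
  | tmul b u => rw [oneT, nuT_tmul, nuB_onel, nuH_onel]

lemma nuT_oner (x : B ⊗[k] H) : nuT BB x (oneT BB) = x := by
  induction x using TensorProduct.induction_on with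
  | zero => simp
  | add x1 x2 ih1 ih2 => simp [map_add, LinearMap.add_apply, ih1, ih2]
  | tmul b u => rw [oneT, nuT_tmul, nuB_oner, nuH_oner]

lemma map_symm_cancel (t : B ⊗[k] H) :
    TensorProduct.map BB.β.symm.toLinearMap HH.α.symm.toLinearMap
      (TensorProduct.map BB.β.toLinearMap HH.α.toLinearMap t) = t := by
  induction t using TensorProduct.induction_on with
  | zero => simp
  | add t1 t2 ih1 ih2 => simp [map_add, ih1, ih2]
  | tmul b u => simp

lemma rho_beta (b : B) :
    BB.ρ (BB.β b)
      = TensorProduct.map BB.β.toLinearMap HH.α.toLinearMap (BB.ρ b) := by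
  rw [BB.ρ_β, BB.reprρ b, map_sum]
  simp

lemma rho_beta_symm (b : B) :
    BB.ρ (BB.β.symm b)
      = TensorProduct.map BB.β.symm.toLinearMap HH.α.symm.toLinearMap (BB.ρ b) := by
  have h := rho_beta BB (BB.β.symm b)
  rw [BB.β.apply_symm_apply] at h
  rw [h, map_symm_cancel]

lemma rho_mul' (b b' : B) :
    BB.ρ (BB.mul b b') = MT BB (BB.ρ b) (BB.ρ b') := by
  rw [BB.ρ_mul, BB.reprρ b, BB.reprρ b',
    map_sum (MT BB) (fun i => BB.r0 b i ⊗ₜ[k] BB.r1 b i) (BB.Tc b),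
    LinearMap.sum_apply]
  refine Finset.sum_congr rfl fun i _ => ?_
  rw [map_sum]
  refine Finset.sum_congr rfl fun j _ => ?_
  rw [MT_tmul]

lemma MT_symm (x y : B ⊗[k] H) :
    MT BB (TensorProduct.map BB.β.symm.toLinearMap HH.α.symm.toLinearMap x)
        (TensorProduct.map BB.β.symm.toLinearMap HH.α.symm.toLinearMap y)
      = nuT BB x y := by
  induction x using TensorProduct.induction_on with
  | zero => simp
  | add x1 x2 ih1 ih2 => simp only [map_add, LinearMap.add_apply, ih1, ih2]
  | tmul b u =>
    induction y using TensorProduct.induction_on with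
    | zero => simp
    | add y1 y2 ih1 ih2 => simp only [map_add, ih1, ih2]
    | tmul b' v =>
      simp [MT_tmul, nuT_tmul, nuB_apply, nuH_apply]

lemma rho_nu (b b' : B) :
    BB.ρ (nuB BB b b') = nuT BB (BB.ρ b) (BB.ρ b') := by
  rw [nuB_apply, rho_mul', rho_beta_symm, rho_beta_symm, MT_symm]

end AlgSide

end CleftProof

namespace CleftProof

open TensorProduct LinearMap

variable {k : Type u} {H B : Type v} [Field k]
  [AddCommGroup H] [Module k H] [AddCommGroup B] [Module k B]
  {HH : HomHopf k H}

section Gamma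

variable (BB : RComodAlg k H B HH) (γ γ' : H →ₗ[k] B)

/-- `cs γ γ' = e` -/
lemma csB_gg'
    (hgg' : ∀ h, ∑ i ∈ HH.T h, BB.mul (γ (HH.d1 h i)) (γ' (HH.d2 h i))
      = HH.counit h • BB.one) :
    cs HH (nuB BB) γ γ' = ce HH BB.one := by
  ext x
  rw [cs_apply]
  have h1 : ∀ i ∈ HH.T (HH.α.symm x),
      nuB BB (γ (HH.d1 (HH.α.symm x) i)) (γ' (HH.d2 (HH.α.symm x) i))
        = BB.β.symm (BB.mul (γ (HH.d1 (HH.α.symm x) i)) (γ' (HH.d2 (HH.α.symm x) i))) := by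
    intro i _
    rw [nuB_apply, βs_mul]
  rw [Finset.sum_congr rfl h1, ← map_sum, hgg', map_smul, βs_one, counit_symm]
  rfl

lemma csB_g'g
    (hg'g : ∀ h, ∑ i ∈ HH.T h, BB.mul (γ' (HH.d1 h i)) (γ (HH.d2 h i))
      = HH.counit h • BB.one) :
    cs HH (nuB BB) γ' γ = ce HH BB.one := by
  ext x
  rw [cs_apply]
  have h1 : ∀ i ∈ HH.T (HH.α.symm x),
      nuB BB (γ' (HH.d1 (HH.α.symm x) i)) (γ (HH.d2 (HH.α.symm x) i))
        = BB.β.symm (BB.mul (γ' (HH.d1 (HH.α.symm x) i)) (γ (HH.d2 (HH.α.symm x) i))) := by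
    intro i _
    rw [nuB_apply, βs_mul]
  rw [Finset.sum_congr rfl h1, ← map_sum, hg'g, map_smul, βs_one, counit_symm]
  rfl

lemma gamma_symm (hga : ∀ h, γ (HH.α h) = BB.β (γ h)) (x : H) :
    γ (HH.α.symm x) = BB.β.symm (γ x) := by
  apply BB.β.injective
  rw [BB.β.apply_symm_apply, ← hga, HH.α.apply_symm_apply]

lemma sum_gg'_symm
    (hgg' : ∀ h, ∑ i ∈ HH.T h, BB.mul (γ (HH.d1 h i)) (γ' (HH.d2 h i))
      = HH.counit h • BB.one) (y : H) :
    ∑ i ∈ HH.T y, BB.mul (γ (HH.α.symm (HH.d1 y i))) (γ' (HH.α.symm (HH.d2 y i)))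
      = HH.counit y • BB.one := by
  have h1 := congrArg (TensorProduct.lift ((BB.mul ∘ₗ γ).compl₂ γ')) (comul_symm HH y)
  rw [HH.repr y, HH.repr (HH.α.symm y), map_sum, map_sum, map_sum] at h1
  simp only [TensorProduct.map_tmul, TensorProduct.lift.tmul, LinearMap.compl₂_apply,
    LinearMap.comp_apply, LinearEquiv.coe_coe] at h1
  rw [h1, hgg' (HH.α.symm y), counit_symm]

lemma csB_g_bg'a (hga : ∀ h, γ (HH.α h) = BB.β (γ h))
    (hgg' : ∀ h, ∑ i ∈ HH.T h, BB.mul (γ (HH.d1 h i)) (γ' (HH.d2 h i))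
      = HH.counit h • BB.one) :
    cs HH (nuB BB) γ (BB.β.toLinearMap ∘ₗ γ' ∘ₗ HH.α.symm.toLinearMap)
      = ce HH BB.one := by
  ext x
  rw [cs_apply]
  have h1 : ∀ i ∈ HH.T (HH.α.symm x),
      nuB BB (γ (HH.d1 (HH.α.symm x) i))
        ((BB.β.toLinearMap ∘ₗ γ' ∘ₗ HH.α.symm.toLinearMap) (HH.d2 (HH.α.symm x) i))
        = BB.mul (γ (HH.α.symm (HH.d1 (HH.α.symm x) i)))
            (γ' (HH.α.symm (HH.d2 (HH.α.symm x) i))) := by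
    intro i _
    rw [nuB_apply]
    simp only [LinearMap.comp_apply, LinearEquiv.coe_coe, BB.β.symm_apply_apply]
    rw [gamma_symm BB γ hga]
  rw [Finset.sum_congr rfl h1, sum_gg'_symm BB γ γ' hgg', counit_symm]
  rfl

lemma gamma'_alpha (hga : ∀ h, γ (HH.α h) = BB.β (γ h))
    (hgg' : ∀ h, ∑ i ∈ HH.T h, BB.mul (γ (HH.d1 h i)) (γ' (HH.d2 h i))
      = HH.counit h • BB.one)
    (hg'g : ∀ h, ∑ i ∈ HH.T h, BB.mul (γ' (HH.d1 h i)) (γ (HH.d2 h i))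
      = HH.counit h • BB.one) :
    ∀ h, γ' (HH.α h) = BB.β (γ' h) := by
  have huniq : γ' = BB.β.toLinearMap ∘ₗ γ' ∘ₗ HH.α.symm.toLinearMap :=
    cs_unique HH (nuB BB) BB.one (nuB_assoc BB) (nuB_onel BB) (nuB_oner BB)
      (csB_g_bg'a BB γ γ' hga hgg') (csB_g'g BB γ γ' hg'g)
  intro h
  conv_lhs => rw [huniq]
  simp [HH.α.symm_apply_apply]

end Gamma

end CleftProof

namespace CleftProof

open TensorProduct LinearMap

variable {k : Type u} {H B : Type v} [Field k]
  [AddCommGroup H] [Module k H] [AddCommGroup B] [Module k B]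
  {HH : HomHopf k H}

section Main

variable (BB : RComodAlg k H B HH) (γ γ' : H →ₗ[k] B)

/-- `P(x ⊗ y) = γ'(x) γ(y)` -/
noncomputable def Pm : H ⊗[k] H →ₗ[k] B :=
  TensorProduct.lift ((BB.mul ∘ₗ γ').compl₂ γ)

lemma Pm_tmul (x y : H) : Pm BB γ γ' (x ⊗ₜ[k] y) = BB.mul (γ' x) (γ y) := rfl

variable (HH) in
/-- `Q(x ⊗ y) = S(x) y` -/
noncomputable def Qm : H ⊗[k] H →ₗ[k] H :=
  TensorProduct.lift (HH.mul ∘ₗ HH.S)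

lemma Qm_tmul (x y : H) : Qm HH (x ⊗ₜ[k] y) = HH.mul (HH.S x) y := rfl

lemma Pm_Dt
    (hg'g : ∀ h, ∑ i ∈ HH.T h, BB.mul (γ' (HH.d1 h i)) (γ (HH.d2 h i))
      = HH.counit h • BB.one) (y : H) :
    Pm BB γ γ' (Dt HH y) = HH.counit y • BB.one := by
  rw [Dt_repr, map_sum]
  simp only [Pm_tmul]
  rw [hg'g, counit_symm]

variable (HH) in
lemma Qm_Dt (y : H) : Qm HH (Dt HH y) = HH.counit y • HH.one := by
  rw [Dt_repr, map_sum]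
  simp only [Qm_tmul]
  rw [HH.S_left, counit_symm]

/-- `Ξ((a⊗b)⊗(c⊗d)) = γ'(b)γ(c) ⊗ S(a)d` -/
noncomputable def Xi : (H ⊗[k] H) ⊗[k] (H ⊗[k] H) →ₗ[k] B ⊗[k] H :=
  TensorProduct.map (Pm BB γ γ') (Qm HH) ∘ₗ
    (TensorProduct.tensorTensorTensorComm k H H H H).toLinearMap ∘ₗ
    TensorProduct.map (TensorProduct.comm k H H).toLinearMap
      (LinearMap.id : H ⊗[k] H →ₗ[k] H ⊗[k] H)

lemma Xi_tmul (a b c d : H) :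
    Xi BB γ γ' ((a ⊗ₜ[k] b) ⊗ₜ[k] (c ⊗ₜ[k] d))
      = BB.mul (γ' b) (γ c) ⊗ₜ[k] HH.mul (HH.S a) d := by
  simp [Xi, TensorProduct.tensorTensorTensorComm_tmul, Pm_tmul, Qm_tmul]

noncomputable def La : (H ⊗[k] H) ⊗[k] H →ₗ[k] B ⊗[k] H :=
  Xi BB γ γ' ∘ₗ TensorProduct.map (LinearMap.id : H ⊗[k] H →ₗ[k] H ⊗[k] H) (Dt HH)

lemma La_tmul (x : H ⊗[k] H) (v : H) :
    La BB γ γ' (x ⊗ₜ[k] v) = Xi BB γ γ' (x ⊗ₜ[k] Dt HH v) := by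
  simp [La]

lemma G'_repr (hga' : ∀ h, γ' (HH.α h) = BB.β (γ' h)) (y : H) :
    (TensorProduct.map γ' HH.S) ((TensorProduct.comm k H H) (HH.comul y))
      = ∑ i ∈ HH.T (HH.α.symm y),
          BB.β (γ' (HH.d2 (HH.α.symm y) i)) ⊗ₜ[k] HH.α (HH.S (HH.d1 (HH.α.symm y) i)) := by
  rw [comul_alpha' HH y, map_sum, map_sum]
  refine Finset.sum_congr rfl fun i _ => ?_
  rw [TensorProduct.comm_tmul, TensorProduct.map_tmul, hga', HH.S_α]

lemma F_repr
    (hcom : ∀ h, BB.ρ (γ h) = ∑ i ∈ HH.T h, γ (HH.d1 h i) ⊗ₜ[k] HH.d2 h i)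
    (hga : ∀ h, γ (HH.α h) = BB.β (γ h)) (y : H) :
    BB.ρ (γ y) = ∑ i ∈ HH.T (HH.α.symm y),
        BB.β (γ (HH.d1 (HH.α.symm y) i)) ⊗ₜ[k] HH.α (HH.d2 (HH.α.symm y) i) := by
  have h0 : BB.ρ (γ y) = TensorProduct.map γ LinearMap.id (HH.comul y) := by
    rw [hcom y, HH.repr y, map_sum]
    simp
  rw [h0, comul_alpha' HH y, map_sum]
  refine Finset.sum_congr rfl fun i _ => ?_
  rw [TensorProduct.map_tmul, hga, LinearMap.id_apply]

lemma nuT_G'F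
    (hcom : ∀ h, BB.ρ (γ h) = ∑ i ∈ HH.T h, γ (HH.d1 h i) ⊗ₜ[k] HH.d2 h i)
    (hga : ∀ h, γ (HH.α h) = BB.β (γ h))
    (hga' : ∀ h, γ' (HH.α h) = BB.β (γ' h)) (y z : H) :
    nuT BB ((TensorProduct.map γ' HH.S) ((TensorProduct.comm k H H) (HH.comul y)))
      (BB.ρ (γ z))
      = Xi BB γ γ' (Dt HH y ⊗ₜ[k] Dt HH z) := by
  rw [G'_repr BB γ' hga' y, F_repr BB γ hcom hga z, Dt_repr HH y, Dt_repr HH z]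
  rw [map_sum (nuT BB), LinearMap.sum_apply, TensorProduct.sum_tmul, map_sum]
  refine Finset.sum_congr rfl fun j _ => ?_
  rw [map_sum, TensorProduct.tmul_sum, map_sum]
  refine Finset.sum_congr rfl fun l _ => ?_
  rw [Xi_tmul, nuT_tmul, nuB_apply, nuH_apply]
  simp

lemma xi_za (a u : H) (t : H ⊗[k] H) :
    Xi BB γ γ' ((a ⊗ₜ[k] u) ⊗ₜ[k] t)
      = (TensorProduct.map (Pm BB γ γ') (HH.mul (HH.S a)))
          ((TensorProduct.assoc k H H H).symm (u ⊗ₜ[k] t)) := by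
  induction t using TensorProduct.induction_on with
  | zero => simp
  | add t1 t2 ih1 ih2 => simp only [TensorProduct.tmul_add, map_add, ih1, ih2]
  | tmul c d =>
    rw [Xi_tmul, TensorProduct.assoc_symm_tmul, TensorProduct.map_tmul, Pm_tmul]

lemma step_inner
    (hg'g : ∀ h, ∑ i ∈ HH.T h, BB.mul (γ' (HH.d1 h i)) (γ (HH.d2 h i))
      = HH.counit h • BB.one) (a c : H) :
    La BB γ γ' ((TensorProduct.assoc k H H H).symm (a ⊗ₜ[k] Dt HH c))
      = BB.one ⊗ₜ[k] HH.mul (HH.S a) c := by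
  have h1 : La BB γ γ' ((TensorProduct.assoc k H H H).symm (a ⊗ₜ[k] Dt HH c))
      = (TensorProduct.map (Pm BB γ γ') (HH.mul (HH.S a)))
          ((TensorProduct.assoc k H H H).symm
            ((TensorProduct.map LinearMap.id (Dt HH)) (Dt HH c))) := by
    rw [Dt_repr HH c, TensorProduct.tmul_sum,
      map_sum (TensorProduct.assoc k H H H).symm, map_sum (La BB γ γ'),
      map_sum (TensorProduct.map LinearMap.id (Dt HH)),
      map_sum (TensorProduct.assoc k H H H).symm,
      map_sum (TensorProduct.map (Pm BB γ γ') (HH.mul (HH.S a)))]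
    refine Finset.sum_congr rfl fun l _ => ?_
    rw [TensorProduct.assoc_symm_tmul, La_tmul, xi_za, TensorProduct.map_tmul,
      LinearMap.id_apply]
  rw [h1, ← coassoc_t' HH c, Dt_repr HH c,
    map_sum (TensorProduct.map (Dt HH) LinearMap.id),
    map_sum (TensorProduct.map (Pm BB γ γ') (HH.mul (HH.S a)))]
  have h2 : ∀ l ∈ HH.T (HH.α.symm c),
      (TensorProduct.map (Pm BB γ γ') (HH.mul (HH.S a)))
          ((TensorProduct.map (Dt HH) LinearMap.id)
            (HH.d1 (HH.α.symm c) l ⊗ₜ[k] HH.d2 (HH.α.symm c) l))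
        = BB.one ⊗ₜ[k] (HH.counit (HH.d1 (HH.α.symm c) l) •
            HH.mul (HH.S a) (HH.d2 (HH.α.symm c) l)) := by
    intro l _
    rw [TensorProduct.map_tmul, TensorProduct.map_tmul, LinearMap.id_apply,
      Pm_Dt BB γ γ' hg'g, TensorProduct.smul_tmul]
  rw [Finset.sum_congr rfl h2, ← TensorProduct.tmul_sum]
  congr 1
  have h3 : ∑ l ∈ HH.T (HH.α.symm c),
      HH.counit (HH.d1 (HH.α.symm c) l) • HH.mul (HH.S a) (HH.d2 (HH.α.symm c) l)
        = HH.mul (HH.S a) (∑ l ∈ HH.T (HH.α.symm c),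
            HH.counit (HH.d1 (HH.α.symm c) l) • HH.d2 (HH.α.symm c) l) := by
    rw [map_sum]
    simp
  rw [h3, HH.counit_left, HH.α.apply_symm_apply]

lemma csT_FG
    (hgg' : ∀ h, ∑ i ∈ HH.T h, BB.mul (γ (HH.d1 h i)) (γ' (HH.d2 h i))
      = HH.counit h • BB.one) :
    cs HH (nuT BB) (BB.ρ ∘ₗ γ) (BB.ρ ∘ₗ γ') = ce HH (oneT BB) := by
  ext x
  rw [cs_apply]
  have hterm : ∀ i ∈ HH.T (HH.α.symm x),
      nuT BB ((BB.ρ ∘ₗ γ) (HH.d1 (HH.α.symm x) i)) ((BB.ρ ∘ₗ γ') (HH.d2 (HH.α.symm x) i))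
        = BB.ρ (nuB BB (γ (HH.d1 (HH.α.symm x) i)) (γ' (HH.d2 (HH.α.symm x) i))) :=
    fun i _ => (rho_nu BB _ _).symm
  rw [Finset.sum_congr rfl hterm, ← map_sum, ← cs_apply HH (nuB BB) γ γ',
    csB_gg' BB γ γ' hgg', ce_apply, map_smul, BB.ρ_one]
  rfl

lemma csT_G'F
    (hcom : ∀ h, BB.ρ (γ h) = ∑ i ∈ HH.T h, γ (HH.d1 h i) ⊗ₜ[k] HH.d2 h i)
    (hga : ∀ h, γ (HH.α h) = BB.β (γ h))
    (hga' : ∀ h, γ' (HH.α h) = BB.β (γ' h))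
    (hg'g : ∀ h, ∑ i ∈ HH.T h, BB.mul (γ' (HH.d1 h i)) (γ (HH.d2 h i))
      = HH.counit h • BB.one) :
    cs HH (nuT BB)
        (TensorProduct.map γ' HH.S ∘ₗ (TensorProduct.comm k H H).toLinearMap ∘ₗ HH.comul)
        (BB.ρ ∘ₗ γ) = ce HH (oneT BB) := by
  ext x
  rw [cs_apply]
  have hterm : ∀ i ∈ HH.T (HH.α.symm x),
      nuT BB ((TensorProduct.map γ' HH.S ∘ₗ
          (TensorProduct.comm k H H).toLinearMap ∘ₗ HH.comul) (HH.d1 (HH.α.symm x) i))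
        ((BB.ρ ∘ₗ γ) (HH.d2 (HH.α.symm x) i))
        = La BB γ γ' (Dt HH (HH.d1 (HH.α.symm x) i) ⊗ₜ[k] HH.d2 (HH.α.symm x) i) := by
    intro i _
    simp only [LinearMap.comp_apply, LinearEquiv.coe_coe]
    rw [La_tmul, nuT_G'F BB γ γ' hcom hga hga']
  rw [Finset.sum_congr rfl hterm]
  have h2 : ∑ i ∈ HH.T (HH.α.symm x),
      La BB γ γ' (Dt HH (HH.d1 (HH.α.symm x) i) ⊗ₜ[k] HH.d2 (HH.α.symm x) i)
        = La BB γ γ' ((TensorProduct.map (Dt HH) LinearMap.id) (Dt HH x)) := by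
    rw [Dt_repr HH x, map_sum (TensorProduct.map (Dt HH) LinearMap.id),
      map_sum (La BB γ γ')]
    simp
  rw [h2, coassoc_t' HH x]
  have h3 : (TensorProduct.map LinearMap.id (Dt HH)) (Dt HH x)
      = ∑ i ∈ HH.T (HH.α.symm x),
          HH.d1 (HH.α.symm x) i ⊗ₜ[k] Dt HH (HH.d2 (HH.α.symm x) i) := by
    rw [Dt_repr HH x, map_sum]
    simp
  rw [h3, map_sum (TensorProduct.assoc k H H H).symm, map_sum (La BB γ γ'),
    Finset.sum_congr rfl (fun i _ => step_inner BB γ γ' hg'g _ _),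
    ← TensorProduct.tmul_sum, HH.S_left, counit_symm, TensorProduct.tmul_smul]
  rfl

end Main

end CleftProof

/-- If `γ : H → B` is a convolution invertible right `H`-comodule map
with `γ(1) = 1` (a cleft extension), then `ρ ∘ γ⁻¹ = (γ⁻¹ ⊗ S) ∘ τ ∘ Δ`; in Sweedler
notation `ρ(γ⁻¹(h)) = γ⁻¹(h₂) ⊗ S(h₁)`. -/
theorem cleft_inverse_coaction {k : Type u} {H B : Type v} [Field k]
    [AddCommGroup H] [Module k H] [AddCommGroup B] [Module k B]
    (HH : HomHopf k H) (BB : RComodAlg k H B HH) (γ γ' : H →ₗ[k] B)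
    (hγ : CleftData BB γ γ') :
    ∀ h, BB.ρ (γ' h) = ∑ i ∈ HH.T h, γ' (HH.d2 h i) ⊗ₜ[k] HH.S (HH.d1 h i) := by
  obtain ⟨hcom, hga, hgg', hg'g, hone⟩ := hγ
  have hga' : ∀ h, γ' (HH.α h) = BB.β (γ' h) :=
    CleftProof.gamma'_alpha BB γ γ' hga hgg' hg'g
  have huniq : (TensorProduct.map γ' HH.S ∘ₗ
      (TensorProduct.comm k H H).toLinearMap ∘ₗ HH.comul) = BB.ρ ∘ₗ γ' :=
    CleftProof.cs_unique HH (CleftProof.nuT BB) (CleftProof.oneT BB)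
      (CleftProof.nuT_assoc BB) (CleftProof.nuT_onel BB) (CleftProof.nuT_oner BB)
      (CleftProof.csT_FG BB γ γ' hgg')
      (CleftProof.csT_G'F BB γ γ' hcom hga hga' hg'g)
  intro h
  have hpt := LinearMap.congr_fun huniq h
  simp only [LinearMap.comp_apply, LinearEquiv.coe_coe] at hpt
  rw [← hpt, HH.repr h, map_sum, map_sum]
  simp [TensorProduct.comm_tmul]
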